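/- Let 0 < β < 1/2 and let ε > 0 be sufficiently small. Fix z₀ ∈ ℂ with z₀ ≠ 0 and set r₀ = ε|z₀|. Then there exists a constant c(ε) > 0 such that for all z₁, z₂ ∈ B(z₀, r₀), one has ||z₁|^{β-1} z₁ - |z₂|^{β-1} z₂| ≥ c(ε) · r₀^{β-1} · |z₁ - z₂|. In particular, on B(z₀, r₀) the Euclidean distance and the pulled-back distance |ξ(z₁) - ξ(z₂)| (with ξ(z) = |z|^{β-1} z) are equivalent up to the factor r₀^{β-1}. -/

import Mathlib

open Metric

private lemma mvt_rpow {γ M x y : ℝ} (hγ : 1 ≤ γ)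
    (hx : x ∈ Set.Icc (0:ℝ) M) (hy : y ∈ Set.Icc (0:ℝ) M) :
    |x ^ γ - y ^ γ| ≤ γ * M ^ (γ - 1) * |x - y| := by
  have hγ0 : (0:ℝ) < γ := lt_of_lt_of_le one_pos hγ
  have key := Convex.norm_image_sub_le_of_norm_hasDerivWithin_le
    (f := fun t : ℝ => t ^ γ) (f' := fun t : ℝ => γ * t ^ (γ - 1))
    (s := Set.Icc (0:ℝ) M) (C := γ * M ^ (γ - 1))
    (fun t _ => (Real.hasDerivAt_rpow_const (Or.inr hγ)).hasDerivWithinAt)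
    (fun t ht => by
      rw [Real.norm_eq_abs, abs_mul, abs_of_pos hγ0,
        abs_of_nonneg (Real.rpow_nonneg ht.1 _)]
      exact mul_le_mul_of_nonneg_left
        (Real.rpow_le_rpow ht.1 ht.2 (by linarith)) hγ0.le)
    (convex_Icc 0 M) hy hx
  simpa [Real.norm_eq_abs] using key

private lemma lip_rpow {α M : ℝ} (hα : 2 ≤ α) {a b : ℂ}
    (ha : ‖a‖ ≤ M) (hb : ‖b‖ ≤ M) :
    ‖(((‖a‖ ^ (α - 1) : ℝ) : ℂ) * a
        - ((‖b‖ ^ (α - 1) : ℝ) : ℂ) * b)‖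
      ≤ α * M ^ (α - 1) * ‖(a - b)‖ := by
  set A := ‖a‖ with hA
  set B := ‖b‖ with hB
  have hA0 : 0 ≤ A := norm_nonneg a
  have hB0 : 0 ≤ B := norm_nonneg b
  rcases le_or_gt M 0 with hM | hM
  · have haz : a = 0 := by
      have := norm_eq_zero.mp (le_antisymm (ha.trans hM) hA0)
      exact this
    have hbz : b = 0 := norm_eq_zero.mp (le_antisymm (hb.trans hM) hB0)
    simp [haz, hbz]
  -- split
  have hsplit : ((A ^ (α - 1) : ℝ) : ℂ) * a - ((B ^ (α - 1) : ℝ) : ℂ) * b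
      = ((A ^ (α - 1) : ℝ) : ℂ) * (a - b) + (((A ^ (α - 1) - B ^ (α - 1) : ℝ)) : ℂ) * b := by
    push_cast
    ring
  rw [hsplit]
  have h1 : ‖(((A ^ (α - 1) : ℝ) : ℂ) * (a - b))‖
      ≤ M ^ (α - 1) * ‖(a - b)‖ := by
    rw [norm_mul, Complex.norm_real, Real.norm_eq_abs, abs_of_nonneg (Real.rpow_nonneg hA0 _)]
    exact mul_le_mul_of_nonneg_right (Real.rpow_le_rpow hA0 ha (by linarith))
      (norm_nonneg _)
  have hAB : |A - B| ≤ ‖(a - b)‖ := abs_norm_sub_norm_le a b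
  have h2 : |A ^ (α - 1) - B ^ (α - 1)| ≤ (α - 1) * M ^ (α - 2) * ‖(a - b)‖ := by
    have := mvt_rpow (γ := α - 1) (M := M) (x := A) (y := B) (by linarith)
      ⟨hA0, ha⟩ ⟨hB0, hb⟩
    have h' : (α - 1) * M ^ (α - 1 - 1) * |A - B|
        ≤ (α - 1) * M ^ (α - 2) * ‖(a - b)‖ := by
      have : α - 1 - 1 = α - 2 := by ring
      rw [this]
      exact mul_le_mul_of_nonneg_left hAB
        (mul_nonneg (by linarith) (Real.rpow_nonneg hM.le _))
    exact this.trans h'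
  have h3 : ‖((((A ^ (α - 1) - B ^ (α - 1) : ℝ)) : ℂ) * b)‖
      ≤ (α - 1) * M ^ (α - 2) * ‖(a - b)‖ * M := by
    rw [norm_mul, Complex.norm_real, Real.norm_eq_abs]
    calc |A ^ (α - 1) - B ^ (α - 1)| * ‖b‖
        ≤ ((α - 1) * M ^ (α - 2) * ‖(a - b)‖) * M := by
          apply mul_le_mul h2 hb hB0
          exact mul_nonneg (mul_nonneg (by linarith : (0:ℝ) ≤ α - 1)
            (Real.rpow_nonneg hM.le _)) (norm_nonneg _)
      _ = _ := by ring
  have hMpow : M ^ (α - 2) * M = M ^ (α - 1) := by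
    rw [← Real.rpow_add_one hM.ne' (α - 2)]
    ring_nf
  calc ‖(((A ^ (α - 1) : ℝ) : ℂ) * (a - b)
        + (((A ^ (α - 1) - B ^ (α - 1) : ℝ)) : ℂ) * b)‖
      ≤ ‖(((A ^ (α - 1) : ℝ) : ℂ) * (a - b))‖
        + ‖((((A ^ (α - 1) - B ^ (α - 1) : ℝ)) : ℂ) * b)‖ :=
        norm_add_le _ _
    _ ≤ M ^ (α - 1) * ‖(a - b)‖
        + (α - 1) * M ^ (α - 2) * ‖(a - b)‖ * M := add_le_add h1 h3
    _ = α * M ^ (α - 1) * ‖(a - b)‖ := by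
        have : (α - 1) * M ^ (α - 2) * ‖(a - b)‖ * M
            = (α - 1) * (M ^ (α - 2) * M) * ‖(a - b)‖ := by ring
        rw [this, hMpow]; ring

private lemma inv_id {β : ℝ} (hβ : 0 < β) {z : ℂ} (hz : z ≠ 0) :
    ((‖(((‖z‖ ^ (β - 1) : ℝ) : ℂ) * z)‖ ^ (1 / β - 1) : ℝ) : ℂ)
        * (((‖z‖ ^ (β - 1) : ℝ) : ℂ) * z) = z := by
  have hz0 : 0 < ‖z‖ := norm_pos_iff.mpr hz
  have habs : ‖(((‖z‖ ^ (β - 1) : ℝ) : ℂ) * z)‖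
      = ‖z‖ ^ β := by
    rw [norm_mul, Complex.norm_real, Real.norm_eq_abs, abs_of_nonneg (Real.rpow_nonneg hz0.le _),
      ← Real.rpow_add_one hz0.ne' (β - 1)]
    ring_nf
  rw [habs, ← Real.rpow_mul hz0.le]
  have hexp : β * (1 / β - 1) = 1 - β := by field_simp
  rw [hexp, ← mul_assoc, ← Complex.ofReal_mul, ← Real.rpow_add hz0]
  norm_num

/-- Lower bi-Lipschitz bound for the conic coordinate change `ξ(z) = |z|^(β-1) z`
on balls `B(z₀, ε|z₀|)`, for ε sufficiently small. -/
theorem stmt_1 (β : ℝ) (hβ₀ : 0 < β) (hβ₁ : β < 1/2) :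
    ∃ ε₀ : ℝ, 0 < ε₀ ∧ ∀ ε : ℝ, 0 < ε → ε ≤ ε₀ → ∀ z₀ : ℂ, z₀ ≠ 0 →
      ∃ c : ℝ, 0 < c ∧ ∀ z₁ z₂ : ℂ,
        z₁ ∈ ball z₀ (ε * ‖z₀‖) → z₂ ∈ ball z₀ (ε * ‖z₀‖) →
        c * (ε * ‖z₀‖) ^ (β - 1) * ‖(z₁ - z₂)‖
          ≤ ‖(((‖z₁‖ ^ (β - 1) : ℝ) : ℂ) * z₁
              - ((‖z₂‖ ^ (β - 1) : ℝ) : ℂ) * z₂)‖ := by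
  refine ⟨1/2, by norm_num, fun ε hε hε2 z₀ hz₀ => ?_⟩
  set r : ℝ := ‖z₀‖ with hr
  have hr0 : 0 < r := norm_pos_iff.mpr hz₀
  have hεr : 0 < ε * r := mul_pos hε hr0
  set M : ℝ := (2 * r) ^ β with hM
  have hM0 : 0 < M := Real.rpow_pos_of_pos (by linarith) _
  set K : ℝ := (1 / β) * M ^ (1 / β - 1) with hK
  have hK0 : 0 < K := mul_pos (by positivity) (Real.rpow_pos_of_pos hM0 _)
  refine ⟨(ε * r) ^ (1 - β) / K, by positivity, fun z₁ z₂ h₁ h₂ => ?_⟩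
  have hα : (2:ℝ) ≤ 1 / β := by
    rw [le_div_iff₀ hβ₀]; linarith
  -- facts about points in the ball
  have hball : ∀ z : ℂ, z ∈ ball z₀ (ε * r) → z ≠ 0 ∧ ‖z‖ ≤ 2 * r := by
    intro z hzb
    rw [mem_ball, Complex.dist_eq] at hzb
    have h2 : ‖z‖ - ‖z₀‖ ≤ ‖(z - z₀)‖ := by
      have h := abs_norm_sub_norm_le z z₀
      calc ‖z‖ - ‖z₀‖ ≤ |‖z‖ - ‖z₀‖| := le_abs_self _
        _ ≤ ‖(z - z₀)‖ := h
    have hεr2 : ε * r ≤ r / 2 := by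
      have : ε * r ≤ (1/2) * r := mul_le_mul_of_nonneg_right hε2 hr0.le
      linarith
    constructor
    · intro h0
      rw [h0] at hzb
      simp at hzb
      linarith [hr, hεr2, hr0, hzb]
    · linarith [h2, hzb, hεr2, hr, hr0]
  obtain ⟨hz₁0, hz₁M⟩ := hball z₁ h₁
  obtain ⟨hz₂0, hz₂M⟩ := hball z₂ h₂
  set w₁ : ℂ := ((‖z₁‖ ^ (β - 1) : ℝ) : ℂ) * z₁ with hw₁
  set w₂ : ℂ := ((‖z₂‖ ^ (β - 1) : ℝ) : ℂ) * z₂ with hw₂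
  have hwabs : ∀ z : ℂ, z ≠ 0 → ‖z‖ ≤ 2 * r →
      ‖(((‖z‖ ^ (β - 1) : ℝ) : ℂ) * z)‖ ≤ M := by
    intro z hz hzM
    have hz0 : 0 < ‖z‖ := norm_pos_iff.mpr hz
    have : ‖(((‖z‖ ^ (β - 1) : ℝ) : ℂ) * z)‖ = ‖z‖ ^ β := by
      rw [norm_mul, Complex.norm_real, Real.norm_eq_abs, abs_of_nonneg (Real.rpow_nonneg hz0.le _),
        ← Real.rpow_add_one hz0.ne' (β - 1)]
      ring_nf
    rw [this, hM]
    exact Real.rpow_le_rpow hz0.le hzM hβ₀.le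
  have hmain : ‖(z₁ - z₂)‖ ≤ K * ‖(w₁ - w₂)‖ := by
    have h := lip_rpow (α := 1 / β) (M := M) hα
      (a := w₁) (b := w₂) (hwabs z₁ hz₁0 hz₁M) (hwabs z₂ hz₂0 hz₂M)
    rw [hw₁, hw₂] at h
    rw [inv_id hβ₀ hz₁0, inv_id hβ₀ hz₂0] at h
    rw [← hw₁, ← hw₂] at h
    calc ‖(z₁ - z₂)‖ ≤ (1/β) * M ^ (1/β - 1) * ‖(w₁ - w₂)‖ := h
      _ = K * ‖(w₁ - w₂)‖ := by rw [hK]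
  have hc : (ε * r) ^ (1 - β) / K * (ε * r) ^ (β - 1) = 1 / K := by
    rw [div_mul_eq_mul_div, ← Real.rpow_add hεr]
    norm_num
  rw [hc, one_div, inv_mul_le_iff₀ hK0]
  linarith [hmain]
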